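/- The two call-by-value small-step systems for xCL agree on evaluation to values: for every closed term t and every value v, t →* v in the system with rules (a), (b), (c) if and only if t →* v in the system with rules (a1), (a2), (b), (c). -/

import Mathlib

/-- Closed terms of extended combinatory logic (xCL). -/
inductive Tm : Type
  | S : Tm
  | K : Tm
  | I : Tm
  | S1 : Tm → Tm
  | K1 : Tm → Tm
  | S2 : Tm → Tm → Tm
  | app : Tm → Tm → Tm

/-- A term is a value iff its topmost constructor is one of `S, K, I, S', K', S''`. -/
def Tm.IsValue : Tm → Prop
  | .app _ _ => False
  | _ => True

/-- Labeled transitions `t ─s→ t'` of call-by-name xCL. -/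
inductive LStep : Tm → Tm → Tm → Prop
  | S (t : Tm) : LStep .S t (.S1 t)
  | S1 (t s : Tm) : LStep (.S1 t) s (.S2 t s)
  | S2 (t s r : Tm) : LStep (.S2 t s) r (.app (.app t r) (.app s r))
  | K (t : Tm) : LStep .K t (.K1 t)
  | K1 (t s : Tm) : LStep (.K1 t) s t
  | I (t : Tm) : LStep .I t t

/-- Unlabeled small-step transitions `t → t'` of call-by-name xCL. -/
inductive Step : Tm → Tm → Prop
  | appL {t t' : Tm} (s : Tm) : Step t t' → Step (.app t s) (.app t' s)
  | beta {t t' s : Tm} : LStep t s t' → Step (.app t s) t'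

/-- Call-by-value big-step semantics `t ⇓ v` of xCL. -/
inductive BigV : Tm → Tm → Prop
  | val {v : Tm} : v.IsValue → BigV v v
  | appI {s t v : Tm} : BigV s .I → BigV t v → BigV (.app s t) v
  | appK {s t w : Tm} : BigV s .K → BigV t w → BigV (.app s t) (.K1 w)
  | appS {s t w : Tm} : BigV s .S → BigV t w → BigV (.app s t) (.S1 w)
  | appK1 {s t r w v : Tm} : BigV s (.K1 r) → BigV t w → BigV r v → BigV (.app s t) v
  | appS1 {s t r w : Tm} : BigV s (.S1 r) → BigV t w → BigV (.app s t) (.S2 r w)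
  | appS2 {s t r q w v : Tm} :
      BigV s (.S2 r q) → BigV t w → BigV (.app (.app r w) (.app q w)) v → BigV (.app s t) v

/-- The original call-by-value small-step system with rules (a), (b), (c). -/
inductive StepA : Tm → Tm → Prop
  | a {t t' : Tm} (s : Tm) : StepA t t' → StepA (.app t s) (.app t' s)
  | b {t s s' : Tm} : t.IsValue → StepA s s' → StepA (.app t s) (.app t s')
  | c {t s t' : Tm} : s.IsValue → LStep t s t' → StepA (.app t s) t'

/-- The modified call-by-value small-step system with rules (a1), (a2), (b), (c). -/
inductive StepB : Tm → Tm → Prop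
  | a1 {t t' s s' : Tm} : StepB t t' → StepB s s' → StepB (.app t s) (.app t' s')
  | a2 {t t' s : Tm} : StepB t t' → s.IsValue → StepB (.app t s) (.app t' s)
  | b {t s s' : Tm} : t.IsValue → StepB s s' → StepB (.app t s) (.app t s')
  | c {t s t' : Tm} : s.IsValue → LStep t s t' → StepB (.app t s) t'

open Relation

lemma bigv_value : ∀ {t v : Tm}, BigV t v → v.IsValue := by
  intro t v h
  induction h with
  | val h => exact h
  | appI _ _ _ ih => exact ih
  | appK => trivial
  | appS => trivial
  | appK1 _ _ _ _ _ ih => exact ih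
  | appS1 => trivial
  | appS2 _ _ _ _ _ ih => exact ih

lemma expandA {t t' : Tm} (h : StepA t t') : ∀ {v}, BigV t' v → BigV t v := by
  induction h with
  | a s h ih =>
    intro v hv
    cases hv with
    | val hw => exact hw.elim
    | appI h1 h2 => exact .appI (ih h1) h2
    | appK h1 h2 => exact .appK (ih h1) h2
    | appS h1 h2 => exact .appS (ih h1) h2
    | appK1 h1 h2 h3 => exact .appK1 (ih h1) h2 h3
    | appS1 h1 h2 => exact .appS1 (ih h1) h2
    | appS2 h1 h2 h3 => exact .appS2 (ih h1) h2 h3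
  | b hval h ih =>
    intro v hv
    cases hv with
    | val hw => exact hw.elim
    | appI h1 h2 => exact .appI h1 (ih h2)
    | appK h1 h2 => exact .appK h1 (ih h2)
    | appS h1 h2 => exact .appS h1 (ih h2)
    | appK1 h1 h2 h3 => exact .appK1 h1 (ih h2) h3
    | appS1 h1 h2 => exact .appS1 h1 (ih h2)
    | appS2 h1 h2 h3 => exact .appS2 h1 (ih h2) h3
  | c hs hl =>
    intro v hv
    cases hl with
    | S s => cases hv with
      | val _ => exact .appS (.val trivial) (.val hs)
    | S1 r s => cases hv with
      | val _ => exact .appS1 (.val trivial) (.val hs)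
    | S2 r q s => exact .appS2 (.val trivial) (.val hs) hv
    | K s => cases hv with
      | val _ => exact .appK (.val trivial) (.val hs)
    | K1 r s => exact .appK1 (.val trivial) (.val hs) hv
    | I s => exact .appI (.val trivial) hv

lemma expandB {t t' : Tm} (h : StepB t t') : ∀ {v}, BigV t' v → BigV t v := by
  induction h with
  | a1 h1 h2 ih1 ih2 =>
    intro v hv
    cases hv with
    | val hw => exact hw.elim
    | appI h1 h2 => exact .appI (ih1 h1) (ih2 h2)
    | appK h1 h2 => exact .appK (ih1 h1) (ih2 h2)
    | appS h1 h2 => exact .appS (ih1 h1) (ih2 h2)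
    | appK1 h1 h2 h3 => exact .appK1 (ih1 h1) (ih2 h2) h3
    | appS1 h1 h2 => exact .appS1 (ih1 h1) (ih2 h2)
    | appS2 h1 h2 h3 => exact .appS2 (ih1 h1) (ih2 h2) h3
  | a2 h hval ih =>
    intro v hv
    cases hv with
    | val hw => exact hw.elim
    | appI h1 h2 => exact .appI (ih h1) h2
    | appK h1 h2 => exact .appK (ih h1) h2
    | appS h1 h2 => exact .appS (ih h1) h2
    | appK1 h1 h2 h3 => exact .appK1 (ih h1) h2 h3
    | appS1 h1 h2 => exact .appS1 (ih h1) h2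
    | appS2 h1 h2 h3 => exact .appS2 (ih h1) h2 h3
  | b hval h ih =>
    intro v hv
    cases hv with
    | val hw => exact hw.elim
    | appI h1 h2 => exact .appI h1 (ih h2)
    | appK h1 h2 => exact .appK h1 (ih h2)
    | appS h1 h2 => exact .appS h1 (ih h2)
    | appK1 h1 h2 h3 => exact .appK1 h1 (ih h2) h3
    | appS1 h1 h2 => exact .appS1 h1 (ih h2)
    | appS2 h1 h2 h3 => exact .appS2 h1 (ih h2) h3
  | c hs hl =>
    intro v hv
    cases hl with
    | S s => cases hv with
      | val _ => exact .appS (.val trivial) (.val hs)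
    | S1 r s => cases hv with
      | val _ => exact .appS1 (.val trivial) (.val hs)
    | S2 r q s => exact .appS2 (.val trivial) (.val hs) hv
    | K s => cases hv with
      | val _ => exact .appK (.val trivial) (.val hs)
    | K1 r s => exact .appK1 (.val trivial) (.val hs) hv
    | I s => exact .appI (.val trivial) hv

lemma bigv_of_stepsA {t v : Tm} (h : ReflTransGen StepA t v) (hv : v.IsValue) :
    BigV t v := by
  induction h using Relation.ReflTransGen.head_induction_on with
  | refl => exact .val hv
  | head hstep _ ih => exact expandA hstep ih

lemma bigv_of_stepsB {t v : Tm} (h : ReflTransGen StepB t v) (hv : v.IsValue) :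
    BigV t v := by
  induction h using Relation.ReflTransGen.head_induction_on with
  | refl => exact .val hv
  | head hstep _ ih => exact expandB hstep ih

lemma congA_L {s s' : Tm} (t : Tm) (h : ReflTransGen StepA s s') :
    ReflTransGen StepA (.app s t) (.app s' t) :=
  ReflTransGen.lift (fun x => Tm.app x t) (fun _ _ hh => StepA.a t hh) _ _ h

lemma congA_R {t t' s : Tm} (hs : s.IsValue) (h : ReflTransGen StepA t t') :
    ReflTransGen StepA (.app s t) (.app s t') :=
  ReflTransGen.lift (fun x => Tm.app s x) (fun _ _ hh => StepA.b hs hh) _ _ h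

lemma stepsA_of_bigv : ∀ {t v : Tm}, BigV t v → ReflTransGen StepA t v := by
  intro t v h
  induction h with
  | val _ => exact .refl
  | appI h1 h2 ih1 ih2 =>
      exact ((congA_L _ ih1).trans (congA_R trivial ih2)).trans
        (ReflTransGen.single (.c (bigv_value h2) (.I _)))
  | appK h1 h2 ih1 ih2 =>
      exact ((congA_L _ ih1).trans (congA_R trivial ih2)).trans
        (ReflTransGen.single (.c (bigv_value h2) (.K _)))
  | appS h1 h2 ih1 ih2 =>
      exact ((congA_L _ ih1).trans (congA_R trivial ih2)).trans
        (ReflTransGen.single (.c (bigv_value h2) (.S _)))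
  | appK1 h1 h2 h3 ih1 ih2 ih3 =>
      exact (((congA_L _ ih1).trans (congA_R trivial ih2)).trans
        (ReflTransGen.single (.c (bigv_value h2) (.K1 _ _)))).trans ih3
  | appS1 h1 h2 ih1 ih2 =>
      exact ((congA_L _ ih1).trans (congA_R trivial ih2)).trans
        (ReflTransGen.single (.c (bigv_value h2) (.S1 _ _)))
  | appS2 h1 h2 h3 ih1 ih2 ih3 =>
      exact (((congA_L _ ih1).trans (congA_R trivial ih2)).trans
        (ReflTransGen.single (.c (bigv_value h2) (.S2 _ _ _)))).trans ih3

lemma congB {s s' : Tm} (h1 : ReflTransGen StepB s s') (hs : s'.IsValue) :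
    ∀ {t t' : Tm}, ReflTransGen StepB t t' → t'.IsValue →
      ReflTransGen StepB (.app s t) (.app s' t') := by
  induction h1 using Relation.ReflTransGen.head_induction_on with
  | refl =>
    intro t t' h2 ht
    exact ReflTransGen.lift (fun x => Tm.app s' x) (fun _ _ hh => StepB.b hs hh) _ _ h2
  | head hstep _ ih =>
    intro t t' h2 ht
    rcases h2.cases_head with rfl | ⟨t1, ht1, ht2⟩
    · exact (ReflTransGen.single (.a2 hstep ht)).trans (ih .refl ht)
    · exact (ReflTransGen.single (.a1 hstep ht1)).trans (ih ht2 ht)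

lemma stepsB_of_bigv : ∀ {t v : Tm}, BigV t v → ReflTransGen StepB t v := by
  intro t v h
  induction h with
  | val _ => exact .refl
  | appI h1 h2 ih1 ih2 =>
      exact (congB ih1 trivial ih2 (bigv_value h2)).trans
        (ReflTransGen.single (.c (bigv_value h2) (.I _)))
  | appK h1 h2 ih1 ih2 =>
      exact (congB ih1 trivial ih2 (bigv_value h2)).trans
        (ReflTransGen.single (.c (bigv_value h2) (.K _)))
  | appS h1 h2 ih1 ih2 =>
      exact (congB ih1 trivial ih2 (bigv_value h2)).trans
        (ReflTransGen.single (.c (bigv_value h2) (.S _)))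
  | appK1 h1 h2 h3 ih1 ih2 ih3 =>
      exact ((congB ih1 trivial ih2 (bigv_value h2)).trans
        (ReflTransGen.single (.c (bigv_value h2) (.K1 _ _)))).trans ih3
  | appS1 h1 h2 ih1 ih2 =>
      exact (congB ih1 trivial ih2 (bigv_value h2)).trans
        (ReflTransGen.single (.c (bigv_value h2) (.S1 _ _)))
  | appS2 h1 h2 h3 ih1 ih2 ih3 =>
      exact ((congB ih1 trivial ih2 (bigv_value h2)).trans
        (ReflTransGen.single (.c (bigv_value h2) (.S2 _ _ _)))).trans ih3

/-- The two call-by-value small-step systems for xCL agree on evaluation to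
values: `t →* v` in system (a)(b)(c) iff `t →* v` in system (a1)(a2)(b)(c). -/
theorem xCL_cbv_systems_agree_on_values (t v : Tm) (hv : v.IsValue) :
    Relation.ReflTransGen StepA t v ↔ Relation.ReflTransGen StepB t v := by
  constructor
  · intro h; exact stepsB_of_bigv (bigv_of_stepsA h hv)
  · intro h; exact stepsA_of_bigv (bigv_of_stepsB h hv)
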